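/- Let W : ℝ^n → ℝ be differentiable with ∇W globally Lipschitz with constant L_W > 0 and ∇W(x̄) = 0, set F := f + g + h, and let 0 < β < α. Let x ∈ ℝ^n satisfy (∇W(x))ᵀ F(x) ≤ −α ‖x − x̄‖², and let x_k, x_0 ∈ ℝ^n satisfy ‖x − x_k‖ ≤ ((α − β)/(L_W L_g)) ‖x − x̄‖ and ‖x − x_0‖ ≤ (β/(L_W L_h)) ‖x − x̄‖. Then (∇W(x))ᵀ ( F(x) + g(x_k) − g(x) + h(x_0) − h(x) ) ≤ 0. -/

import Mathlib

/-- Monotonic decrease of `W` along the time-triggered dynamics: if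
`(∇W(x))ᵀF(x) ≤ −α‖x − x̄‖²` with `F = f + g + h`, `0 < β < α`, and the
sampled states satisfy `‖x − x_k‖ ≤ ((α−β)/(L_W L_g))‖x − x̄‖` and
`‖x − x₀‖ ≤ (β/(L_W L_h))‖x − x̄‖`, then
`(∇W(x))ᵀ(F(x) + g(x_k) − g(x) + h(x₀) − h(x)) ≤ 0`. -/
theorem dissipation_nonpositive_of_sampled_bounds
    {n : ℕ} (f g h : EuclideanSpace ℝ (Fin n) → EuclideanSpace ℝ (Fin n))
    (Lf Lg Lh : ℝ) (hLf : 0 < Lf) (hLg : 0 < Lg) (hLh : 0 < Lh)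
    (hf : ∀ a b, ‖f a - f b‖ ≤ Lf * ‖a - b‖)
    (hg : ∀ a b, ‖g a - g b‖ ≤ Lg * ‖a - b‖)
    (hh : ∀ a b, ‖h a - h b‖ ≤ Lh * ‖a - b‖)
    (xb : EuclideanSpace ℝ (Fin n)) (heq : f xb + g xb + h xb = 0)
    (W : EuclideanSpace ℝ (Fin n) → ℝ) (hW : Differentiable ℝ W)
    (LW : ℝ) (hLW : 0 < LW)
    (hWLip : ∀ a b, ‖gradient W a - gradient W b‖ ≤ LW * ‖a - b‖)
    (hWbar : gradient W xb = 0)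
    (α β : ℝ) (hβ : 0 < β) (hβα : β < α)
    (x : EuclideanSpace ℝ (Fin n))
    (hx : (inner ℝ (gradient W x) (f x + g x + h x) : ℝ) ≤ -α * ‖x - xb‖ ^ 2)
    (xk x0 : EuclideanSpace ℝ (Fin n))
    (hxk : ‖x - xk‖ ≤ ((α - β) / (LW * Lg)) * ‖x - xb‖)
    (hx0 : ‖x - x0‖ ≤ (β / (LW * Lh)) * ‖x - xb‖) :
    (inner ℝ (gradient W x)
        ((f x + g x + h x) + (g xk - g x) + (h x0 - h x)) : ℝ) ≤ 0 := by
  set u := gradient W x with hu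
  have hnu : ‖u‖ ≤ LW * ‖x - xb‖ := by
    have := hWLip x xb
    rwa [hWbar, sub_zero] at this
  have h1 : (inner ℝ u (g xk - g x) : ℝ) ≤ (α - β) * ‖x - xb‖ ^ 2 := by
    calc (inner ℝ u (g xk - g x) : ℝ) ≤ ‖u‖ * ‖g xk - g x‖ := real_inner_le_norm _ _
      _ ≤ (LW * ‖x - xb‖) * (Lg * ((α - β) / (LW * Lg) * ‖x - xb‖)) := by
          apply mul_le_mul hnu _ (norm_nonneg _) (by positivity)
          calc ‖g xk - g x‖ ≤ Lg * ‖xk - x‖ := hg xk x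
            _ ≤ Lg * ((α - β) / (LW * Lg) * ‖x - xb‖) := by
                rw [norm_sub_rev]; exact mul_le_mul_of_nonneg_left hxk hLg.le
      _ = (α - β) * ‖x - xb‖ ^ 2 := by field_simp
  have h2 : (inner ℝ u (h x0 - h x) : ℝ) ≤ β * ‖x - xb‖ ^ 2 := by
    calc (inner ℝ u (h x0 - h x) : ℝ) ≤ ‖u‖ * ‖h x0 - h x‖ := real_inner_le_norm _ _
      _ ≤ (LW * ‖x - xb‖) * (Lh * (β / (LW * Lh) * ‖x - xb‖)) := by
          apply mul_le_mul hnu _ (norm_nonneg _) (by positivity)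
          calc ‖h x0 - h x‖ ≤ Lh * ‖x0 - x‖ := hh x0 x
            _ ≤ Lh * (β / (LW * Lh) * ‖x - xb‖) := by
                rw [norm_sub_rev]; exact mul_le_mul_of_nonneg_left hx0 hLh.le
      _ = β * ‖x - xb‖ ^ 2 := by field_simp
  rw [inner_add_right, inner_add_right]
  linarith
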